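/- arXiv:1503.08625 — 2 statements merged into one kernel-verified Lean document; each statement's English description precedes it below -/
import Mathlib

section
/- Let V be an isometry on a complex Hilbert space G and let g ∈ G. Let M_g denote the closed linear span of {Vⁿ g : n ≥ 0}, and let N_g = M_g ∩ (V M_g)^⊥ (the wandering subspace of the restriction of V to M_g; note V M_g is closed since V is an isometry). If g₀ denotes the orthogonal projection of g onto N_g, then N_g equals the closed linear span of {g₀}, i.e. N_g = ℂ·g₀. -/
open scoped InnerProductSpace

/-- for an isometry `V` on a Hilbert space `G` and `g ∈ G`, the wandering
subspace `N_g = M_g ∩ (V M_g)ᗮ` of the cyclic subspace `M_g = closed span {Vⁿ g : n ≥ 0}`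
is the one-dimensional space `ℂ·g₀`, where `g₀` is the orthogonal projection of `g`
onto `N_g`. -/
theorem wandering_subspace_of_cyclic_subspace_eq_span_proj
    {G : Type*} [NormedAddCommGroup G] [InnerProductSpace ℂ G] [CompleteSpace G]
    (V : G →L[ℂ] G) (hV : ∀ x y : G, ⟪V x, V y⟫_ℂ = ⟪x, y⟫_ℂ)
    (g : G)
    (Mg : Submodule ℂ G)
    (hMg : Mg = (Submodule.span ℂ (Set.range fun n : ℕ => (V ^ n) g)).topologicalClosure)
    (Ng : Submodule ℂ G)
    (hNg : Ng = Mg ⊓ (Mg.map (V : G →ₗ[ℂ] G))ᗮ)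
    (g₀ : G) (hg₀mem : g₀ ∈ Ng) (hg₀proj : g - g₀ ∈ Ngᗮ) :
    Ng = Submodule.span ℂ {g₀} := by
  have hMgmem : ∀ n : ℕ, (V ^ n) g ∈ Mg := by
    intro n
    rw [hMg]
    exact Submodule.le_topologicalClosure _ (Submodule.subset_span ⟨n, rfl⟩)
  -- Key: any element of Ng orthogonal to g₀ is zero.
  have key : ∀ h ∈ Ng, ⟪g₀, h⟫_ℂ = 0 → h = 0 := by
    intro h hh horth
    have hhM : h ∈ Mg := (hNg ▸ hh).1
    have hhVM : h ∈ (Mg.map (V : G →ₗ[ℂ] G))ᗮ := (hNg ▸ hh).2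
    have hn : ∀ n : ℕ, ⟪(V ^ n) g, h⟫_ℂ = 0 := by
      intro n
      cases n with
      | zero =>
        have h1 : ⟪g - g₀, h⟫_ℂ = 0 := Submodule.inner_left_of_mem_orthogonal hh hg₀proj
        have heq : g₀ + (g - g₀) = g := by abel
        have : ⟪g, h⟫_ℂ = ⟪g₀, h⟫_ℂ + ⟪g - g₀, h⟫_ℂ := by
          rw [← inner_add_left, heq]
        simpa [horth, h1] using this
      | succ n =>
        have hmem : (V ^ (n + 1)) g ∈ Mg.map (V : G →ₗ[ℂ] G) := by
          refine ⟨(V ^ n) g, hMgmem n, ?_⟩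
          rw [pow_succ']
          rfl
        exact Submodule.inner_right_of_mem_orthogonal hmem hhVM
    have hle : Mg ≤ (ℂ ∙ h)ᗮ := by
      rw [hMg]
      refine Submodule.topologicalClosure_minimal _ ?_ (Submodule.isClosed_orthogonal _)
      rw [Submodule.span_le]
      rintro _ ⟨n, rfl⟩
      exact Submodule.mem_orthogonal_singleton_iff_inner_left.2 (hn n)
    have : ⟪h, h⟫_ℂ = 0 :=
      Submodule.mem_orthogonal_singleton_iff_inner_right.1 (hle hhM)
    exact inner_self_eq_zero.1 this
  refine le_antisymm ?_ ?_
  · intro h hh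
    set c : ℂ := ⟪g₀, h⟫_ℂ / ⟪g₀, g₀⟫_ℂ with hc
    have hmem : h - c • g₀ ∈ Ng := Ng.sub_mem hh (Ng.smul_mem c hg₀mem)
    have horth : ⟪g₀, h - c • g₀⟫_ℂ = 0 := by
      rw [inner_sub_right, inner_smul_right]
      by_cases h0 : g₀ = 0
      · simp [h0]
      · rw [hc, div_mul_cancel₀ _ (inner_self_ne_zero.2 h0)]
        ring
    have hh' : h = c • g₀ := sub_eq_zero.1 (key _ hmem horth)
    rw [hh']
    exact Submodule.smul_mem _ _ (Submodule.mem_span_singleton_self g₀)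
  · rw [Submodule.span_le, Set.singleton_subset_iff]
    exact hg₀mem
end

section
/- Let H be a complex Hilbert space, S_H the unilateral shift on ℓ²(ℕ,H), and S the unilateral shift on ℓ²(ℕ) = ℓ²(ℕ,ℂ). For every nonzero g ∈ ℓ²(ℕ,H) there exists an isometry W : ℓ²(ℕ) → ℓ²(ℕ,H) satisfying W ∘ S = S_H ∘ W whose range equals M_g, the closed linear span of {S_Hⁿ g : n ≥ 0}, and such that the vector y := W* g is outer, i.e. the closed linear span of {Sⁿ y : n ≥ 0} is all of ℓ²(ℕ). In particular g = W y. -/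
noncomputable section

open scoped ENNReal InnerProductSpace

set_option linter.unusedSectionVars false

namespace Shift

variable (H : Type*) [NormedAddCommGroup H] [InnerProductSpace ℂ H]

/-- The underlying function of the unilateral shift: `(shiftFun x) 0 = 0`,
`(shiftFun x) (n+1) = x n`. -/
def shiftFun (x : ℕ → H) : ℕ → H
  | 0 => 0
  | n + 1 => x n

variable {H}

theorem memℓp_shiftFun {x : ℕ → H} (hx : Memℓp x 2) : Memℓp (shiftFun H x) 2 := by
  apply memℓp_gen
  have h2 : (0:ℝ) < (2 : ℝ≥0∞).toReal := by norm_num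
  have hs : Summable fun n : ℕ => ‖x n‖ ^ (2 : ℝ≥0∞).toReal := (memℓp_gen_iff h2).1 hx
  exact (summable_nat_add_iff 1).1 (by simpa [shiftFun] using hs)

theorem tsum_shiftFun (x : ℕ → H) (hx : Memℓp x 2) :
    (∑' n, ‖shiftFun H x n‖ ^ (2 : ℝ≥0∞).toReal) = ∑' n, ‖x n‖ ^ (2 : ℝ≥0∞).toReal := by
  have h2 : (0:ℝ) < (2 : ℝ≥0∞).toReal := by norm_num
  rw [Summable.tsum_eq_zero_add (memℓp_gen_iff h2 |>.1 (memℓp_shiftFun hx))]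
  simp [shiftFun]

variable (H)

/-- The unilateral shift as a linear isometry on `ℓ²(ℕ, H)`. -/
def shiftLi : lp (fun _ : ℕ => H) 2 →ₗᵢ[ℂ] lp (fun _ : ℕ => H) 2 where
  toFun x := ⟨shiftFun H x, memℓp_shiftFun (lp.memℓp x)⟩
  map_add' x y := by
    apply lp.ext
    funext n
    cases n <;> simp [shiftFun, lp.coeFn_add] <;> first | exact (add_zero 0).symm | rfl
  map_smul' c x := by
    apply lp.ext
    funext n
    cases n <;> simp [shiftFun, lp.coeFn_smul]
  norm_map' x := by
    have h2 : (0:ℝ) < (2 : ℝ≥0∞).toReal := by norm_num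
    rw [lp.norm_eq_tsum_rpow h2, lp.norm_eq_tsum_rpow h2]
    congr 1
    exact tsum_shiftFun x (lp.memℓp x)

/-- The unilateral shift `S_H` on `ℓ²(ℕ, H)`, as a continuous linear map:
`(shift H x) 0 = 0` and `(shift H x) (n+1) = x n`. -/
def shift : lp (fun _ : ℕ => H) 2 →L[ℂ] lp (fun _ : ℕ => H) 2 :=
  (shiftLi H).toContinuousLinearMap

variable {H}

section Helpers

variable {H : Type*} [NormedAddCommGroup H] [InnerProductSpace ℂ H]

local notation "𝓔" => lp (fun _ : ℕ => H) 2

lemma shift_apply (x : 𝓔) (n : ℕ) : (shift H x : ∀ _ : ℕ, H) n = shiftFun H (⇑x) n := rfl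

lemma shift_isometry : Isometry (shift H) := (shiftLi H).isometry

lemma shift_inner (x y : 𝓔) : ⟪shift H x, shift H y⟫_ℂ = ⟪x, y⟫_ℂ :=
  (shiftLi H).inner_map_map x y

lemma shift_pow_succ (n : ℕ) (x : 𝓔) :
    (shift H ^ (n + 1)) x = shift H ((shift H ^ n) x) := by
  rw [pow_succ', ContinuousLinearMap.mul_apply]

lemma shift_pow_succ' (n : ℕ) (x : 𝓔) :
    (shift H ^ (n + 1)) x = (shift H ^ n) (shift H x) := by
  rw [pow_succ, ContinuousLinearMap.mul_apply]

lemma shift_comm_pow (n : ℕ) (x : 𝓔) :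
    shift H ((shift H ^ n) x) = (shift H ^ n) (shift H x) := by
  rw [← shift_pow_succ, shift_pow_succ']

lemma shift_pow_inner (n : ℕ) (x y : 𝓔) :
    ⟪(shift H ^ n) x, (shift H ^ n) y⟫_ℂ = ⟪x, y⟫_ℂ := by
  induction n with
  | zero => simp
  | succ k ih => rw [shift_pow_succ, shift_pow_succ, shift_inner, ih]

lemma shift_pow_norm (n : ℕ) (x : 𝓔) : ‖(shift H ^ n) x‖ = ‖x‖ := by
  induction n with
  | zero => simp
  | succ k ih => rw [shift_pow_succ]; calc ‖shift H ((shift H ^ k) x)‖ = ‖(shift H ^ k) x‖ := (shiftLi H).norm_map _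
      _ = ‖x‖ := ih

lemma shift_pow_coeff (k m : ℕ) (h : m < k) (x : 𝓔) :
    ((shift H ^ k) x : ∀ _ : ℕ, H) m = 0 := by
  induction k generalizing m with
  | zero => omega
  | succ j ih =>
    rw [shift_pow_succ]
    cases m with
    | zero => rfl
    | succ i => exact ih i (by omega)

lemma eq_zero_of_forall_range (x : 𝓔) (h : ∀ k : ℕ, ∃ u : 𝓔, x = (shift H ^ k) u) :
    x = 0 := by
  apply lp.ext
  funext m
  obtain ⟨u, hu⟩ := h (m + 1)
  have := shift_pow_coeff (m + 1) m (Nat.lt_succ_self m) u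
  rw [hu]
  simpa using this

end Helpers
section Helpers2

variable {H : Type*} [NormedAddCommGroup H] [InnerProductSpace ℂ H] [CompleteSpace H]

local notation "𝓔" => lp (fun _ : ℕ => H) 2

/-- closed span of the shift-orbit of `x` -/
def MM (x : 𝓔) : Submodule ℂ 𝓔 :=
  (Submodule.span ℂ (Set.range fun n : ℕ => (shift H ^ n) x)).topologicalClosure

lemma shift_image_closure (s : Set 𝓔) :
    shift H '' closure s = closure (shift H '' s) :=
  ((shift_isometry (H := H)).isClosedEmbedding.closure_image_eq s).symm

lemma shift_image_span (x : 𝓔) :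
    shift H '' (Submodule.span ℂ (Set.range fun n : ℕ => (shift H ^ n) x) : Set 𝓔)
      = (Submodule.span ℂ (Set.range fun n : ℕ => (shift H ^ n) (shift H x)) : Set 𝓔) := by
  have h1 : (Set.range fun n : ℕ => (shift H ^ n) (shift H x))
      = (shift H : 𝓔 →ₗ[ℂ] 𝓔) '' Set.range (fun n : ℕ => (shift H ^ n) x) := by
    rw [← Set.range_comp]
    exact congrArg Set.range (funext fun n => (shift_comm_pow n x).symm)
  rw [h1, ← Submodule.map_span, Submodule.map_coe]
  rfl

lemma shift_image_MM (x : 𝓔) :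
    shift H '' (MM x : Set 𝓔) = (MM (shift H x) : Set 𝓔) := by
  rw [MM, MM, Submodule.topologicalClosure_coe, Submodule.topologicalClosure_coe,
    shift_image_closure, shift_image_span]

lemma not_mem_MM_shift (g : 𝓔) (hg : g ≠ 0) : g ∉ MM (shift H g) := by
  intro hmem
  have step : ∀ x : 𝓔, x ∈ MM (shift H x) → ∃ x', x = shift H x' ∧ x' ∈ MM (shift H x') := by
    intro x hx
    have hrange : x ∈ LinearMap.range (shift H : 𝓔 →ₗ[ℂ] 𝓔) := by
      have hle : MM (shift H x) ≤ LinearMap.range (shift H : 𝓔 →ₗ[ℂ] 𝓔) := by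
        apply Submodule.topologicalClosure_minimal
        · rw [Submodule.span_le]
          rintro _ ⟨n, rfl⟩
          exact ⟨(shift H ^ n) x, (shift_comm_pow n x)⟩
        · have : (LinearMap.range (shift H : 𝓔 →ₗ[ℂ] 𝓔) : Set 𝓔) = Set.range (shift H) := by
            ext z; simp [LinearMap.mem_range]
          rw [this]
          exact (shift_isometry (H := H)).isClosedEmbedding.isClosed_range
      exact hle hx
    obtain ⟨x', hx'⟩ := hrange
    have hx'' : shift H x' = x := hx'
    obtain ⟨z, hz, hzx⟩ : x ∈ shift H '' (MM (shift H x') : Set 𝓔) := by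
      rw [shift_image_MM, hx'']
      exact hx
    have hzx' : z = x' := (shift_isometry (H := H)).injective (hzx.trans hx''.symm)
    subst hzx'
    exact ⟨z, hx''.symm, hz⟩
  have key : ∀ k : ℕ, ∃ u : 𝓔, g = (shift H ^ k) u ∧ u ∈ MM (shift H u) := by
    intro k
    induction k with
    | zero => exact ⟨g, by simp, hmem⟩
    | succ j ih =>
      obtain ⟨u, hu, humem⟩ := ih
      obtain ⟨u', hu', hu'mem⟩ := step u humem
      refine ⟨u', ?_, hu'mem⟩
      rw [hu, hu', ← shift_pow_succ']
  exact hg (eq_zero_of_forall_range g fun k => ⟨(key k).choose, (key k).choose_spec.1⟩)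

end Helpers2
set_option maxHeartbeats 2000000 in
/-- inner-outer factorization of a nonzero vector `g ∈ ℓ²(ℕ,H)`:
there is an inner operator `W : ℓ²(ℕ) → ℓ²(ℕ,H)` with range `M_g` such that `y = W* g`
is outer and `g = W y`. -/
theorem inner_outer_factorization_of_vector
    {H : Type*} [NormedAddCommGroup H] [InnerProductSpace ℂ H] [CompleteSpace H]
    (g : lp (fun _ : ℕ => H) 2) (hg : g ≠ 0) :
    ∃ W : lp (fun _ : ℕ => ℂ) 2 →L[ℂ] lp (fun _ : ℕ => H) 2,
      Isometry W ∧
      W.comp (shift ℂ) = (shift H).comp W ∧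
      LinearMap.range W.toLinearMap =
        (Submodule.span ℂ (Set.range fun n : ℕ => (shift H ^ n) g)).topologicalClosure ∧
      (Submodule.span ℂ
        (Set.range fun n : ℕ =>
          (shift ℂ ^ n) (ContinuousLinearMap.adjoint W g))).topologicalClosure = ⊤ ∧
      g = W (ContinuousLinearMap.adjoint W g) := by
  set N : Submodule ℂ (lp (fun _ : ℕ => H) 2) := MM (shift H g) with hN
  haveI : CompleteSpace N :=
    (Submodule.isClosed_topologicalClosure _).completeSpace_coe
  set p : lp (fun _ : ℕ => H) 2 := (Submodule.orthogonalProjectionOnto N g : lp (fun _ : ℕ => H) 2) with hp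
  have hpN : p ∈ N := (Submodule.orthogonalProjectionOnto N g).2
  set w0 := g - p with hw0def
  have hw0N : w0 ∈ Nᗮ := Submodule.sub_starProjection_mem_orthogonal g
  have hw0ne : w0 ≠ 0 := by
    intro h
    have hgp : g = p := by rwa [sub_eq_zero] at h
    have hgN : g ∈ N := by rw [hgp]; exact hpN
    exact not_mem_MM_shift g hg hgN
  set w := (‖w0‖ : ℂ)⁻¹ • w0 with hwdef
  have hwnorm : ‖w‖ = 1 := by
    rw [hwdef, norm_smul]
    simp [norm_ne_zero_iff.mpr hw0ne, inv_mul_cancel₀]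
  have hwN : w ∈ Nᗮ := Submodule.smul_mem _ _ hw0N
  -- membership facts
  have hNM : N ≤ MM g := by
    apply Submodule.topologicalClosure_minimal
    · rw [Submodule.span_le]
      rintro _ ⟨n, rfl⟩
      show (shift H ^ n) (shift H g) ∈ MM g
      rw [← shift_pow_succ']
      exact Submodule.le_topologicalClosure _ (Submodule.subset_span ⟨n + 1, rfl⟩)
    · exact Submodule.isClosed_topologicalClosure _
  have hgM : g ∈ MM g :=
    Submodule.le_topologicalClosure _ (Submodule.subset_span ⟨0, by simp⟩)
  have hw0M : w0 ∈ MM g := Submodule.sub_mem _ hgM (hNM hpN)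
  have hwM : w ∈ MM g := Submodule.smul_mem _ _ hw0M
  have hSMM : ∀ x ∈ MM g, shift H x ∈ N := by
    intro x hx
    have : shift H x ∈ shift H '' (MM g : Set (lp (fun _ : ℕ => H) 2)) := ⟨x, hx, rfl⟩
    rw [shift_image_MM] at this
    exact this
  set v := fun n : ℕ => (shift H ^ n) w with hvdef
  have hvN : ∀ k : ℕ, 1 ≤ k → v k ∈ N := by
    intro k hk
    induction k with
    | zero => omega
    | succ j ih =>
      rcases Nat.eq_or_lt_of_le hk with h1 | h1
      · have : v 1 = shift H w := by rw [hvdef]; simp [pow_one]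
        rw [← h1, this]
        exact hSMM w hwM
      · have hj : 1 ≤ j := by omega
        have : v (j + 1) = shift H (v j) := shift_pow_succ j w
        rw [this]
        exact hSMM _ (hNM (ih hj))
  have hvM : ∀ n : ℕ, v n ∈ MM g := by
    intro n
    cases n with
    | zero => simpa [hvdef] using hwM
    | succ j => exact hNM (hvN (j + 1) (by omega))
  have hvnorm : ∀ n : ℕ, ‖v n‖ = 1 := fun n => by
    rw [hvdef]; rw [shift_pow_norm]; exact hwnorm
  have hvsplit : ∀ m n : ℕ, m < n → v n = (shift H ^ m) (v (n - m)) := by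
    intro m n hmn
    have h1 : (shift H ^ m) ((shift H ^ (n - m)) w) = (shift H ^ (m + (n - m))) w := by
      rw [pow_add, ContinuousLinearMap.mul_apply]
    have h2 : m + (n - m) = n := by omega
    rw [hvdef]
    simp only []
    rw [h1, h2]
  have hvinner : ∀ m n : ℕ, m < n → ⟪v m, v n⟫_ℂ = 0 := by
    intro m n hmn
    rw [hvsplit m n hmn, hvdef]
    simp only []
    rw [shift_pow_inner]
    exact (Submodule.mem_orthogonal' N w).mp hwN _ (hvN (n - m) (by omega))
  have hv : Orthonormal ℂ v := by
    refine ⟨hvnorm, fun m n hmn => ?_⟩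
    rcases lt_or_gt_of_ne hmn with h | h
    · exact hvinner m n h
    · rw [inner_eq_zero_symm]
      exact hvinner n m h
  -- the closed span of the orthonormal family
  set K : Submodule ℂ (lp (fun _ : ℕ => H) 2) :=
    (Submodule.span ℂ (Set.range v)).topologicalClosure with hKdef
  haveI : CompleteSpace K := (Submodule.isClosed_topologicalClosure _).completeSpace_coe
  have hvK : ∀ n : ℕ, v n ∈ K :=
    fun n => Submodule.le_topologicalClosure _ (Submodule.subset_span ⟨n, rfl⟩)
  have hKM : K ≤ MM g := by
    apply Submodule.topologicalClosure_minimal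
    · rw [Submodule.span_le]
      rintro _ ⟨n, rfl⟩
      exact hvM n
    · exact Submodule.isClosed_topologicalClosure _
  -- claim2 : an element of `MM g` orthogonal to `w0` is in `N`
  have claim2 : ∀ u ∈ MM g, ⟪u, w0⟫_ℂ = 0 → u ∈ N := by
    intro u huM huw0
    set Q : lp (fun _ : ℕ => H) 2 →L[ℂ] lp (fun _ : ℕ => H) 2 :=
      ContinuousLinearMap.id ℂ _ - N.subtypeL.comp (Submodule.orthogonalProjectionOnto N) with hQdef
    have hQapply : ∀ x, Q x = x - (Submodule.orthogonalProjectionOnto N x : lp (fun _ : ℕ => H) 2) := by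
      intro x; simp [hQdef]
    have hQw0 : Q w0 = w0 := by
      rw [hQapply, Submodule.orthogonalProjectionOnto_apply_of_mem_orthogonal hw0N]
      simp
    have hQN : ∀ x ∈ N, Q x = 0 := by
      intro x hx
      rw [hQapply, show ((Submodule.orthogonalProjectionOnto N x : lp (fun _ : ℕ => H) 2)) = x from
        Submodule.starProjection_eq_self_iff.mpr hx, sub_self]
    have hsup : MM g ≤ (Submodule.span ℂ {w0} ⊔ N).topologicalClosure := by
      apply Submodule.topologicalClosure_minimal
      · rw [Submodule.span_le]
        rintro _ ⟨n, rfl⟩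
        refine Submodule.le_topologicalClosure _ ?_
        show (shift H ^ n) g ∈ (Submodule.span ℂ {w0} ⊔ N : Submodule ℂ _)
        cases n with
        | zero =>
          have hg' : g = w0 + p := by rw [hw0def]; abel
          rw [pow_zero, ContinuousLinearMap.one_apply, hg']
          exact Submodule.add_mem _
            (Submodule.mem_sup_left (Submodule.subset_span rfl))
            (Submodule.mem_sup_right hpN)
        | succ j =>
          apply Submodule.mem_sup_right
          rw [shift_pow_succ']
          exact Submodule.le_topologicalClosure _ (Submodule.subset_span ⟨j, rfl⟩)
      · exact Submodule.isClosed_topologicalClosure _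
    set q : lp (fun _ : ℕ => H) 2 := (Submodule.orthogonalProjectionOnto N u : lp (fun _ : ℕ => H) 2) with hq
    have hqN : q ∈ N := (Submodule.orthogonalProjectionOnto N u).2
    have huqN : u - q ∈ Nᗮ := Submodule.sub_starProjection_mem_orthogonal u
    have huqmem : u - q ∈ (Submodule.span ℂ {w0} ⊔ N).topologicalClosure :=
      Submodule.sub_mem _ (hsup huM)
        (Submodule.le_topologicalClosure _ (Submodule.mem_sup_right hqN))
    -- Q maps the sup into span{w0}
    have hQimg : Q '' ((Submodule.span ℂ {w0} ⊔ N : Submodule ℂ _) :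
        Set (lp (fun _ : ℕ => H) 2)) ⊆ (Submodule.span ℂ {w0} : Submodule ℂ _) := by
      rintro _ ⟨x, hx, rfl⟩
      obtain ⟨a, ha, b, hb, rfl⟩ := Submodule.mem_sup.mp hx
      obtain ⟨c, rfl⟩ := Submodule.mem_span_singleton.mp ha
      rw [map_add, hQN b hb, add_zero, map_smul, hQw0]
      exact Submodule.smul_mem _ _ (Submodule.subset_span rfl)
    have hspanclosed : IsClosed ((Submodule.span ℂ {w0} : Submodule ℂ _) :
        Set (lp (fun _ : ℕ => H) 2)) :=
      (Submodule.span ℂ {w0}).closed_of_finiteDimensional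
    have hQuq : Q (u - q) = u - q := by
      rw [hQapply, Submodule.orthogonalProjectionOnto_apply_of_mem_orthogonal huqN]
      simp
    have huqspan : u - q ∈ Submodule.span ℂ {w0} := by
      have h1 : Q (u - q) ∈ Q '' closure ((Submodule.span ℂ {w0} ⊔ N : Submodule ℂ _) :
          Set (lp (fun _ : ℕ => H) 2)) := by
        refine ⟨u - q, ?_, rfl⟩
        rw [← Submodule.topologicalClosure_coe]
        exact huqmem
      have h2 := (image_closure_subset_closure_image Q.continuous) h1
      have h3 := closure_mono hQimg h2
      rw [hspanclosed.closure_eq] at h3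
      rw [← hQuq]
      exact h3
    obtain ⟨c, hc⟩ := Submodule.mem_span_singleton.mp huqspan
    have hinner : ⟪u - q, w0⟫_ℂ = 0 := by
      rw [inner_sub_left, huw0, (Submodule.mem_orthogonal N w0).mp hw0N q hqN, sub_zero]
    have hczero : c = 0 := by
      rw [← hc, inner_smul_left] at hinner
      rcases mul_eq_zero.mp hinner with h | h
      · simpa using h
      · exact absurd h (inner_self_ne_zero.mpr hw0ne)
    have : u = q := by
      have := hc.symm
      rw [hczero, zero_smul] at this
      rwa [sub_eq_zero] at this
    rw [this]; exact hqN
  -- N is the image of MM g under the shift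
  have claim3 : (N : Set (lp (fun _ : ℕ => H) 2)) = shift H '' (MM g) :=
    (shift_image_MM g).symm
  have hw0w : w0 = (‖w0‖ : ℂ) • w := by
    rw [hwdef, smul_smul, mul_inv_cancel₀ (by exact_mod_cast norm_ne_zero_iff.mpr hw0ne),
      one_smul]
  -- density : MM g ≤ K
  have hMK : MM g ≤ K := by
    intro x hx
    set r : lp (fun _ : ℕ => H) 2 := x - (Submodule.orthogonalProjectionOnto K x : lp (fun _ : ℕ => H) 2)
      with hrdef
    have hrK : r ∈ Kᗮ := Submodule.sub_starProjection_mem_orthogonal x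
    have hrM : r ∈ MM g := Submodule.sub_mem _ hx (hKM (Submodule.orthogonalProjectionOnto K x).2)
    have key : ∀ k : ℕ, ∃ u, u ∈ MM g ∧ r = (shift H ^ k) u := by
      intro k
      induction k with
      | zero => exact ⟨r, hrM, by simp⟩
      | succ j ih =>
        obtain ⟨u, huM, hru⟩ := ih
        have huw : ⟪u, w⟫_ℂ = 0 := by
          have h1 : ⟪r, v j⟫_ℂ = 0 :=
            (Submodule.mem_orthogonal' K r).mp hrK _ (hvK j)
          rw [hru, hvdef] at h1
          simp only [] at h1
          rwa [shift_pow_inner] at h1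
        have huw0 : ⟪u, w0⟫_ℂ = 0 := by
          rw [hw0w, inner_smul_right, huw, mul_zero]
        have huN : u ∈ N := claim2 u huM huw0
        have : u ∈ shift H '' (MM g : Set (lp (fun _ : ℕ => H) 2)) := by
          rw [← claim3]; exact huN
        obtain ⟨u', hu'M, hu'⟩ := this
        refine ⟨u', hu'M, ?_⟩
        rw [hru, ← hu', ← shift_pow_succ']
    have hr0 : r = 0 := eq_zero_of_forall_range r fun k =>
      ⟨(key k).choose, (key k).choose_spec.2⟩
    have : x = (Submodule.orthogonalProjectionOnto K x : lp (fun _ : ℕ => H) 2) := by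
      rw [hrdef] at hr0
      rwa [sub_eq_zero] at hr0
    rw [this]
    exact (Submodule.orthogonalProjectionOnto K x).2
  have hKMM : K = MM g := le_antisymm hKM hMK
  -- build the isometry from the orthonormal family
  have fam := hv.orthogonalFamily
  set Wli := fam.linearIsometry with hWli
  set Wc := Wli.toContinuousLinearMap with hWc
  have hWcapp : ∀ x, Wc x = Wli x := fun x => rfl
  -- intertwining
  have hcomm : Wc.comp (shift ℂ) = (shift H).comp Wc := by
    refine ContinuousLinearMap.ext fun f => ?_
    show Wc (shift ℂ f) = shift H (Wc f)
    rw [hWcapp, hWcapp]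
    have hR : HasSum (fun n => f n • v n) (Wli f) := by
      have := fam.hasSum_linearIsometry f
      simpa [LinearIsometry.toSpanSingleton_apply] using this
    have hR2 : HasSum (fun n => f n • v (n + 1)) (shift H (Wli f)) := by
      have h1 : HasSum (fun n => shift H (f n • v n)) (shift H (Wli f)) :=
        (shift H).hasSum hR
      have h2 : (fun n => shift H (f n • v n)) = fun n => f n • v (n + 1) := by
        funext n
        rw [map_smul]
        congr 1
        exact (shift_pow_succ n w).symm
      rwa [h2] at h1
    have hL : HasSum (fun n => (shift ℂ f) n • v n) (Wli (shift ℂ f)) := by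
      have := fam.hasSum_linearIsometry (shift ℂ f)
      simpa [LinearIsometry.toSpanSingleton_apply] using this
    have hz : (shift ℂ f) 0 • v 0 = 0 := by
      have : (shift ℂ f : ∀ _ : ℕ, ℂ) 0 = 0 := rfl
      rw [this, zero_smul]
    have hsucc : ∀ n : ℕ, (shift ℂ f) (n + 1) • v (n + 1) = f n • v (n + 1) := by
      intro n
      congr 1
    have hL2 : HasSum (fun n => (shift ℂ f) n • v n) (shift H (Wli f)) := by
      rw [← hasSum_nat_add_iff' 1]
      simpa [hz, hsucc] using hR2
    exact hL.unique hL2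
  -- range identification
  have hrange : LinearMap.range Wc.toLinearMap = MM g := by
    have h1 : LinearMap.range Wc.toLinearMap = LinearMap.range Wli.toLinearMap := by
      ext x
      constructor
      · rintro ⟨z, rfl⟩; exact ⟨z, rfl⟩
      · rintro ⟨z, rfl⟩; exact ⟨z, rfl⟩
    rw [h1, fam.range_linearIsometry, ← hKMM, hKdef]
    congr 1
    rw [Submodule.span_range_eq_iSup]
    congr 1
    funext i
    rw [LinearMap.span_singleton_eq_range]
    rfl
  -- adjoint facts
  have hadj : ∀ x, ContinuousLinearMap.adjoint Wc (Wc x) = x := by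
    intro x
    refine ext_inner_left ℂ fun z => ?_
    rw [ContinuousLinearMap.adjoint_inner_right]
    rw [hWcapp, hWcapp]
    exact Wli.inner_map_map z x
  have hgrange : g ∈ LinearMap.range Wc.toLinearMap := by rw [hrange]; exact hgM
  obtain ⟨z, hz⟩ := hgrange
  replace hz : Wc z = g := hz
  have hfact : g = Wc (ContinuousLinearMap.adjoint Wc g) := by
    conv_lhs => rw [← hz]
    rw [← hz, hadj]
  -- outer property
  have hy : ContinuousLinearMap.adjoint Wc g = z := by rw [← hz, hadj]
  have hpow : ∀ (n : ℕ) (x : lp (fun _ : ℕ => ℂ) 2),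
      Wc ((shift ℂ ^ n) x) = (shift H ^ n) (Wc x) := by
    intro n
    induction n with
    | zero => intro x; simp
    | succ j ih =>
      intro x
      rw [shift_pow_succ, shift_pow_succ]
      have := ContinuousLinearMap.ext_iff.mp hcomm ((shift ℂ ^ j) x)
      simp only [ContinuousLinearMap.comp_apply] at this
      rw [this, ih]
  have hWcoe : (⇑Wc : lp (fun _ : ℕ => ℂ) 2 → lp (fun _ : ℕ => H) 2) = ⇑Wli := rfl
  have houter : (Submodule.span ℂ
      (Set.range fun n : ℕ =>
        (shift ℂ ^ n) (ContinuousLinearMap.adjoint Wc g))).topologicalClosure = ⊤ := by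
    rw [hy, Submodule.eq_top_iff']
    intro x
    have h2 : ⇑Wc '' ((Submodule.span ℂ (Set.range fun n : ℕ => (shift ℂ ^ n) z)) :
        Set (lp (fun _ : ℕ => ℂ) 2))
        = ((Submodule.span ℂ (Set.range fun n : ℕ => (shift H ^ n) g)) : Set _) := by
      rw [← ContinuousLinearMap.coe_coe Wc, ← Submodule.map_coe, Submodule.map_span,
        ← Set.range_comp]
      refine congrArg (fun s : Set (lp (fun _ : ℕ => H) 2) =>
        SetLike.coe (Submodule.span ℂ s))
        (congrArg Set.range (funext fun n => ?_))
      show Wc ((shift ℂ ^ n) z) = (shift H ^ n) g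
      rw [hpow n z, hz]
    have himg : ⇑Wc ''
        (((Submodule.span ℂ (Set.range fun n : ℕ => (shift ℂ ^ n) z)).topologicalClosure :
          Submodule ℂ (lp (fun _ : ℕ => ℂ) 2)) : Set (lp (fun _ : ℕ => ℂ) 2))
        = ((MM g : Submodule ℂ (lp (fun _ : ℕ => H) 2)) : Set _) := by
      rw [Submodule.topologicalClosure_coe]
      calc ⇑Wc '' closure ((Submodule.span ℂ (Set.range fun n : ℕ => (shift ℂ ^ n) z)) :
              Set (lp (fun _ : ℕ => ℂ) 2))
          = closure (⇑Wc '' ((Submodule.span ℂ (Set.range fun n : ℕ => (shift ℂ ^ n) z)) :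
              Set (lp (fun _ : ℕ => ℂ) 2))) := by
            rw [hWcoe]
            exact (Wli.isometry.isClosedEmbedding.closure_image_eq _).symm
        _ = _ := by rw [h2, MM, Submodule.topologicalClosure_coe]
    have hWx : Wc x ∈ ⇑Wc ''
        (((Submodule.span ℂ (Set.range fun n : ℕ => (shift ℂ ^ n) z)).topologicalClosure :
          Submodule ℂ (lp (fun _ : ℕ => ℂ) 2)) : Set (lp (fun _ : ℕ => ℂ) 2)) := by
      rw [himg]
      have hmem : Wc x ∈ LinearMap.range Wc.toLinearMap := ⟨x, rfl⟩
      rw [hrange] at hmem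
      exact hmem
    obtain ⟨x', hx'T, hx'⟩ := hWx
    have hxx : x' = x := Wli.isometry.injective hx'
    rw [← hxx]
    exact hx'T
  exact ⟨Wc, Wli.isometry, hcomm, hrange, houter, hfact⟩

end Shift
end
end
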